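/- Let t ≥ 1 and let φ, γ : {0, 1, …, t} → ℤ satisfy φ(0) = γ(0) = 0 and φ(k) ≤ γ(k) for all k. Let Q := {x ∈ ℝ^t : φ(k) ≤ x(1) + ⋯ + x(k) ≤ γ(k) for k = 1, …, t}. Let Z ⊆ {1, …, t} be nonempty and let {h₁, …, k₁}, …, {h_q, …, k_q} be the maximal segments of Z (the maximal runs of consecutive integers contained in Z). Then min{x̃(Z) : x ∈ Q} = Σ_{r=1}^{q} (φ(k_r) − γ(h_r − 1)) and max{x̃(Z) : x ∈ Q} = Σ_{r=1}^{q} (γ(k_r) − φ(h_r − 1)); in particular, Q is nonempty and both optima are attained. -/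

import Mathlib

open Finset

private lemma seg_sum' (x : ℕ → ℝ) {a b : ℕ} (ha : 1 ≤ a) (hab : a ≤ b) :
    ∑ i ∈ Finset.Icc a b, x i
      = ∑ i ∈ Finset.Icc 1 b, x i - ∑ i ∈ Finset.Icc 1 (a - 1), x i := by
  have h1 : Finset.Icc 1 b = Finset.Ioc 0 b := by rw [← Finset.Icc_add_one_left_eq_Ioc, zero_add]
  have h2 : Finset.Icc 1 (a - 1) = Finset.Ioc 0 (a - 1) := by rw [← Finset.Icc_add_one_left_eq_Ioc, zero_add]
  have h3 : Finset.Icc a b = Finset.Ioc (a - 1) b := by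
    rw [← Finset.Icc_add_one_left_eq_Ioc, Nat.sub_add_cancel ha]
  rw [h1, h2, h3, eq_sub_iff_add_eq, add_comm]
  exact Finset.sum_Ioc_consecutive x (Nat.zero_le _) (by omega)

private lemma prefix_tele (S : ℕ → ℝ) (j : ℕ) :
    ∑ i ∈ Finset.Icc 1 j, (S i - S (i - 1)) = S j - S 0 := by
  induction j with
  | zero => simp
  | succ n ih =>
    rw [Finset.sum_Icc_succ_top (by omega), ih]
    simp only [Nat.add_sub_cancel]
    ring

/-- extreme values of x̃(Z) over an elementary prefix-bounded
g-polymatroid, expressed via the maximal segments of Z (Lemma on (p*, b*)). -/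
theorem stmt_2 (t : ℕ) (ht : 1 ≤ t) (φ γ : ℕ → ℤ)
    (hφ0 : φ 0 = 0) (hγ0 : γ 0 = 0) (hφγ : ∀ j ≤ t, φ j ≤ γ j)
    (Z : Finset ℕ) (hZ : Z ⊆ Finset.Icc 1 t) (hZne : Z.Nonempty)
    (q : ℕ) (h k : Fin q → ℕ)
    (hhk : ∀ r, 1 ≤ h r ∧ h r ≤ k r ∧ k r ≤ t)
    (hcover : Z = Finset.univ.biUnion fun r => Finset.Icc (h r) (k r))
    (hmax : ∀ r, h r - 1 ∉ Z ∧ k r + 1 ∉ Z)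
    (hdisj : ∀ r r', r ≠ r' →
      Disjoint (Finset.Icc (h r) (k r)) (Finset.Icc (h r') (k r'))) :
    IsLeast ((fun x : ℕ → ℝ => ∑ i ∈ Z, x i) ''
        {x : ℕ → ℝ | ∀ j ∈ Finset.Icc 1 t,
          (φ j : ℝ) ≤ ∑ i ∈ Finset.Icc 1 j, x i ∧
            ∑ i ∈ Finset.Icc 1 j, x i ≤ (γ j : ℝ)})
      (∑ r : Fin q, ((φ (k r) : ℝ) - (γ (h r - 1) : ℝ))) ∧
    IsGreatest ((fun x : ℕ → ℝ => ∑ i ∈ Z, x i) ''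
        {x : ℕ → ℝ | ∀ j ∈ Finset.Icc 1 t,
          (φ j : ℝ) ≤ ∑ i ∈ Finset.Icc 1 j, x i ∧
            ∑ i ∈ Finset.Icc 1 j, x i ≤ (γ j : ℝ)})
      (∑ r : Fin q, ((γ (k r) : ℝ) - (φ (h r - 1) : ℝ))) := by
  have h0Z : (0 : ℕ) ∉ Z := fun h0 => by have := hZ h0; simp at this
  have hkZ : ∀ r : Fin q, k r ∈ Z := fun r => by
    rw [hcover]
    exact Finset.mem_biUnion.2 ⟨r, Finset.mem_univ r,
      Finset.mem_Icc.2 ⟨(hhk r).2.1, le_rfl⟩⟩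
  have hdecomp : ∀ x : ℕ → ℝ, ∑ i ∈ Z, x i =
      ∑ r : Fin q, (∑ i ∈ Finset.Icc 1 (k r), x i
        - ∑ i ∈ Finset.Icc 1 (h r - 1), x i) := by
    intro x
    rw [hcover, Finset.sum_biUnion (fun r _ r' _ hne => hdisj r r' hne)]
    exact Finset.sum_congr rfl fun r _ => seg_sum' x (hhk r).1 (hhk r).2.1
  constructor
  · constructor
    · -- witness for the minimum
      set S : ℕ → ℝ := fun j => if j ∈ Z then (φ j : ℝ) else (γ j : ℝ) with hS
      have hS0 : S 0 = 0 := by simp [hS, h0Z, hγ0]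
      have hP : ∀ j, ∑ i ∈ Finset.Icc 1 j, (S i - S (i - 1)) = S j := by
        intro j; rw [prefix_tele, hS0, sub_zero]
      refine ⟨fun i => S i - S (i - 1), ?_, ?_⟩
      · intro j hj
        rw [hP]
        have hjt := (Finset.mem_Icc.1 hj).2
        have := hφγ j hjt
        by_cases hjZ : j ∈ Z <;> simp [hS, hjZ] <;> exact_mod_cast this
      · simp only
        rw [hdecomp]
        refine Finset.sum_congr rfl fun r _ => ?_
        rw [hP, hP, hS]
        simp [hkZ r, (hmax r).1]
    · -- lower bound
      rintro y ⟨x, hx, rfl⟩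
      simp only
      rw [hdecomp]
      refine Finset.sum_le_sum fun r _ => ?_
      have h1 : (φ (k r) : ℝ) ≤ ∑ i ∈ Finset.Icc 1 (k r), x i :=
        (hx (k r) (Finset.mem_Icc.2 ⟨le_trans (hhk r).1 (hhk r).2.1, (hhk r).2.2⟩)).1
      have h2 : ∑ i ∈ Finset.Icc 1 (h r - 1), x i ≤ (γ (h r - 1) : ℝ) := by
        have hr := hhk r
        rcases Nat.eq_or_lt_of_le hr.1 with he | hl
        · have : h r - 1 = 0 := by omega
          rw [this, hγ0]
          simp
        · exact (hx (h r - 1) (Finset.mem_Icc.2 ⟨by omega, by omega⟩)).2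
      linarith
  · constructor
    · -- witness for the maximum
      set S : ℕ → ℝ := fun j => if j ∈ Z then (γ j : ℝ) else (φ j : ℝ) with hS
      have hS0 : S 0 = 0 := by simp [hS, h0Z, hφ0]
      have hP : ∀ j, ∑ i ∈ Finset.Icc 1 j, (S i - S (i - 1)) = S j := by
        intro j; rw [prefix_tele, hS0, sub_zero]
      refine ⟨fun i => S i - S (i - 1), ?_, ?_⟩
      · intro j hj
        rw [hP]
        have hjt := (Finset.mem_Icc.1 hj).2
        have := hφγ j hjt
        by_cases hjZ : j ∈ Z <;> simp [hS, hjZ] <;> exact_mod_cast this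
      · simp only
        rw [hdecomp]
        refine Finset.sum_congr rfl fun r _ => ?_
        rw [hP, hP, hS]
        simp [hkZ r, (hmax r).1]
    · -- upper bound
      rintro y ⟨x, hx, rfl⟩
      simp only
      rw [hdecomp]
      refine Finset.sum_le_sum fun r _ => ?_
      have h1 : ∑ i ∈ Finset.Icc 1 (k r), x i ≤ (γ (k r) : ℝ) :=
        (hx (k r) (Finset.mem_Icc.2 ⟨le_trans (hhk r).1 (hhk r).2.1, (hhk r).2.2⟩)).2
      have h2 : (φ (h r - 1) : ℝ) ≤ ∑ i ∈ Finset.Icc 1 (h r - 1), x i := by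
        have hr := hhk r
        rcases Nat.eq_or_lt_of_le hr.1 with he | hl
        · have : h r - 1 = 0 := by omega
          rw [this, hφ0]
          simp
        · exact (hx (h r - 1) (Finset.mem_Icc.2 ⟨by omega, by omega⟩)).1
      linarith
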